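/- Lipschitz bound for a right inverse: let E, F be Banach spaces, φ : U ⊆ E → F be C² with φ(0) = 0; suppose φ'(x) has a left inverse A(x) with ‖A(x)η‖ ≤ K‖η‖ for all x ∈ U, and ‖φ''(z)ξ²‖ ≤ M‖ξ‖². If x, x̂ ∈ U lie in a ball of radius r with KMr ≤ 1, then ‖x̂ − x‖ ≤ 2K‖φ(x̂) − φ(x)‖. In particular φ is injective on such a ball. -/

import Mathlib

/-- Lipschitz bound for a right inverse: if `φ'` has a left inverse `A(x)` with
`‖A(x)η‖ ≤ K‖η‖`, `‖φ''(z)ξ²‖ ≤ M‖ξ‖²` on `U`, and `x, y ∈ U` with `‖y - x‖ ≤ r`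
and `K·M·r ≤ 1`, then `‖y - x‖ ≤ 2K‖φ(y) - φ(x)‖`; in particular `φ` is injective
on such a ball. -/
theorem stmt_16 {E F : Type*} [NormedAddCommGroup E] [NormedSpace ℝ E]
    [NormedAddCommGroup F] [NormedSpace ℝ F]
    (U : Set E) (hU : IsOpen U) (hUconv : Convex ℝ U)
    (φ : E → F) (hφ : ContDiffOn ℝ 2 φ U) (hφ0 : φ 0 = 0)
    (A : E → F →L[ℝ] E) (K M r : ℝ) (hK : 0 ≤ K)
    (hA : ∀ x ∈ U, ∀ ξ : E, A x (fderiv ℝ φ x ξ) = ξ)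
    (hAK : ∀ x ∈ U, ∀ η : F, ‖A x η‖ ≤ K * ‖η‖)
    (hM : ∀ z ∈ U, ∀ ξ : E, ‖fderiv ℝ (fderiv ℝ φ) z ξ ξ‖ ≤ M * ‖ξ‖ ^ 2)
    (hKMr : K * M * r ≤ 1)
    (x y : E) (hx : x ∈ U) (hy : y ∈ U) (hxy : ‖y - x‖ ≤ r) :
    ‖y - x‖ ≤ 2 * K * ‖φ y - φ x‖ ∧ (φ y = φ x → y = x) := by
  by_cases hvy : y = x
  · subst hvy
    refine ⟨by simp only [sub_self, norm_zero]; positivity, fun _ => rfl⟩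
  have hvne : y - x ≠ 0 := sub_ne_zero.mpr hvy
  set v : E := y - x with hv
  have hvpos : 0 < ‖v‖ := norm_pos_iff.mpr hvne
  have hM0 : 0 ≤ M := by
    have h := (norm_nonneg _).trans (hM x hx v)
    nlinarith [mul_pos hvpos hvpos, sq_nonneg ‖v‖]
  -- differentiability
  have hd1 : DifferentiableOn ℝ φ U := hφ.differentiableOn (by norm_num)
  have h2 : ContDiffOn ℝ ((1 : ℕ∞) + 1) φ U := by
    exact_mod_cast hφ
  have hd2 : DifferentiableOn ℝ (fderiv ℝ φ) U :=
    (((contDiffOn_succ_iff_fderiv_of_isOpen hU).1 h2).2.2).differentiableOn (by norm_num)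
  -- the segment
  have hγ : ∀ t ∈ Set.Icc (0:ℝ) 1, x + t • v ∈ U := fun t ht =>
    hUconv.add_smul_sub_mem hx hy ht
  -- first derivative of t ↦ φ (x + t v)
  have hline : ∀ t : ℝ, HasDerivAt (fun s : ℝ => x + s • v) v t := by
    intro t
    simpa using ((hasDerivAt_id t).smul_const v).const_add x
  have hder1 : ∀ t ∈ Set.Icc (0:ℝ) 1,
      HasDerivAt (fun s : ℝ => φ (x + s • v)) (fderiv ℝ φ (x + t • v) v) t := by
    intro t ht
    have hmem := hγ t ht
    have hdφ : HasFDerivAt φ (fderiv ℝ φ (x + t • v)) (x + t • v) :=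
      (hd1.differentiableAt (hU.mem_nhds hmem)).hasFDerivAt
    exact hdφ.comp_hasDerivAt t (hline t)
  -- derivative of s ↦ fderiv φ (x + s v) v
  have hder2 : ∀ t ∈ Set.Icc (0:ℝ) 1,
      HasDerivAt (fun s : ℝ => fderiv ℝ φ (x + s • v) v)
        (fderiv ℝ (fderiv ℝ φ) (x + t • v) v v) t := by
    intro t ht
    have hmem := hγ t ht
    have hdφ' : HasFDerivAt (fderiv ℝ φ) (fderiv ℝ (fderiv ℝ φ) (x + t • v)) (x + t • v) :=
      (hd2.differentiableAt (hU.mem_nhds hmem)).hasFDerivAt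
    have h1 : HasDerivAt (fun s : ℝ => fderiv ℝ φ (x + s • v))
        (fderiv ℝ (fderiv ℝ φ) (x + t • v) v) t := hdφ'.comp_hasDerivAt t (hline t)
    simpa using h1.clm_apply (hasDerivAt_const t v)
  -- Step A: Lipschitz bound on the derivative along the segment
  have hg : ∀ t ∈ Set.Icc (0:ℝ) 1,
      ‖fderiv ℝ φ (x + t • v) v - fderiv ℝ φ x v‖ ≤ M * ‖v‖ ^ 2 * t := by
    intro t ht
    have key := Convex.norm_image_sub_le_of_norm_hasDerivWithin_le
      (f := fun s : ℝ => fderiv ℝ φ (x + s • v) v)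
      (f' := fun s : ℝ => fderiv ℝ (fderiv ℝ φ) (x + s • v) v v)
      (s := Set.Icc (0:ℝ) 1) (C := M * ‖v‖ ^ 2)
      (fun s hs => (hder2 s hs).hasDerivWithinAt)
      (fun s hs => hM _ (hγ s hs) v) (convex_Icc 0 1)
      (Set.left_mem_Icc.mpr zero_le_one) ht
    simpa [abs_of_nonneg ht.1] using key
  -- Step B: Taylor estimate ‖φ y - φ x - φ'(x) v‖ ≤ M/2 ‖v‖²
  set f : ℝ → F := fun t => φ (x + t • v) - φ x - t • (fderiv ℝ φ x v) with hf
  have hfd : ∀ t ∈ Set.Ico (0:ℝ) 1,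
      HasDerivWithinAt f (fderiv ℝ φ (x + t • v) v - fderiv ℝ φ x v) (Set.Ici t) t := by
    intro t ht
    have := ((hder1 t ⟨ht.1, ht.2.le⟩).sub_const (φ x)).sub
      ((hasDerivAt_id t).smul_const (fderiv ℝ φ x v))
    simpa [f, Pi.sub_def] using this.hasDerivWithinAt
  have hfc : ContinuousOn f (Set.Icc (0:ℝ) 1) := by
    apply ContinuousOn.sub
    apply ContinuousOn.sub
    · exact hd1.continuousOn.comp (by fun_prop) (fun t ht => hγ t ht)
    · exact continuousOn_const
    · exact (continuous_id.smul continuous_const).continuousOn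
  have hB : ∀ t : ℝ, HasDerivAt (fun s => M * ‖v‖ ^ 2 / 2 * s ^ 2) (M * ‖v‖ ^ 2 * t) t := by
    intro t
    have := ((hasDerivAt_pow 2 t).const_mul (M * ‖v‖ ^ 2 / 2))
    convert this using 1
    all_goals first | rfl | (norm_num; ring)
  have hTaylor : ‖f 1‖ ≤ M * ‖v‖ ^ 2 / 2 * 1 ^ 2 :=
    image_norm_le_of_norm_deriv_right_le_deriv_boundary hfc hfd
      (by simp [f]) hB
      (fun t ht => by simpa using hg t ⟨ht.1, ht.2.le⟩)
      (Set.right_mem_Icc.mpr zero_le_one)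
  have hTay : ‖φ y - φ x - fderiv ℝ φ x v‖ ≤ M * ‖v‖ ^ 2 / 2 := by
    have hxyv : x + v = y := by simp [hv]
    calc ‖φ y - φ x - fderiv ℝ φ x v‖ = ‖f 1‖ := by simp [f, hxyv]
    _ ≤ M * ‖v‖ ^ 2 / 2 := by simpa using hTaylor
  -- combine
  have hmain : ‖v‖ ≤ 2 * K * ‖φ y - φ x‖ := by
    have h1 : ‖v‖ = ‖A x (fderiv ℝ φ x v)‖ := by rw [hA x hx v]
    have h2 : ‖v‖ ≤ K * ‖fderiv ℝ φ x v‖ := h1 ▸ hAK x hx _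
    have h3 : ‖fderiv ℝ φ x v‖ ≤ ‖φ y - φ x‖ + M * ‖v‖ ^ 2 / 2 := by
      calc ‖fderiv ℝ φ x v‖ = ‖(φ y - φ x) - (φ y - φ x - fderiv ℝ φ x v)‖ := by
            congr 1; abel
      _ ≤ ‖φ y - φ x‖ + ‖φ y - φ x - fderiv ℝ φ x v‖ := norm_sub_le _ _
      _ ≤ ‖φ y - φ x‖ + M * ‖v‖ ^ 2 / 2 := by linarith
    have h4 : K * M * ‖v‖ ≤ 1 := le_trans (mul_le_mul_of_nonneg_left hxy (mul_nonneg hK hM0)) hKMr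
    nlinarith [norm_nonneg (φ y - φ x), mul_le_mul_of_nonneg_left h3 hK]
  exact ⟨hmain, fun hEq => by
    have : ‖v‖ ≤ 0 := by simpa [hEq] using hmain
    have : v = 0 := norm_le_zero_iff.mp this
    exact sub_eq_zero.mp this⟩
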